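/- Let τ > 1 be a real number and set D₁ = ∫₀^∞ (x²+1)^{−τ/2} dx. Let (h_k)_{k≥2} be a sequence with h_k ∈ (0,1) for all k, h_k → 0 and k·h_k → ∞ as k → ∞. Then lim_{k→∞} ( π √(1−h_k²) / (h_k k) ) · ∑_{i=1}^{⌊k/2⌋+1} ( 1 + ((1−h_k²)/h_k²) · ((i−1)² π² / k²) )^{−τ/2} = D₁. -/

import Mathlib

open MeasureTheory Filter

namespace Stmt6Aux

noncomputable def f (τ : ℝ) (x : ℝ) : ℝ := (x ^ 2 + 1) ^ (-τ / 2)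

lemma f_cont (τ : ℝ) : Continuous (f τ) := by
  apply Continuous.rpow_const (by continuity)
  intro x; left; positivity

lemma f_nonneg (τ x : ℝ) : 0 ≤ f τ x := Real.rpow_nonneg (by positivity) _

lemma f_le_one (τ : ℝ) (hτ : 0 < τ) (x : ℝ) : f τ x ≤ 1 :=
  Real.rpow_le_one_of_one_le_of_nonpos (by nlinarith [sq_nonneg x]) (by linarith)

lemma f_zero (τ : ℝ) : f τ 0 = 1 := by simp [f]

lemma f_anti (τ : ℝ) (hτ : 0 < τ) : AntitoneOn (f τ) (Set.Ici 0) := by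
  intro a ha b hb hab
  simp only [Set.mem_Ici] at ha hb
  exact Real.rpow_le_rpow_of_nonpos (by positivity) (by nlinarith) (by linarith)

lemma f_int (τ : ℝ) (hτ : 1 < τ) : IntegrableOn (f τ) (Set.Ioi 0) := by
  rw [← Set.Ioc_union_Ioi_eq_Ioi (zero_le_one)]
  refine IntegrableOn.union ?_ ?_
  · exact (f_cont τ).integrableOn_Ioc
  · have hbase : IntegrableOn (fun x : ℝ => x ^ (-τ)) (Set.Ioi 1) :=
      integrableOn_Ioi_rpow_of_lt (by linarith) one_pos
    refine hbase.integrable.mono' ((f_cont τ).aestronglyMeasurable) ?_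
    rw [ae_restrict_iff' measurableSet_Ioi]
    filter_upwards with x hx
    have hx1 : (1:ℝ) < x := hx
    have hx0 : (0:ℝ) < x := by linarith
    rw [Real.norm_of_nonneg (f_nonneg τ x)]
    have h1 : f τ x ≤ (x ^ 2) ^ (-τ / 2) :=
      Real.rpow_le_rpow_of_nonpos (by positivity) (by nlinarith) (by linarith)
    calc f τ x ≤ (x ^ 2) ^ (-τ / 2) := h1
      _ = x ^ (-τ) := by
          rw [← Real.rpow_natCast x 2, ← Real.rpow_mul hx0.le]
          congr 1; ring

lemma riemann (τ : ℝ) (hτ : 1 < τ) (δ : ℕ → ℝ) (N : ℕ → ℕ)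
    (hδpos : ∀ᶠ k in atTop, 0 < δ k)
    (hδ0 : Tendsto δ atTop (nhds 0))
    (hNδ : Tendsto (fun k => (N k : ℝ) * δ k) atTop atTop) :
    Tendsto (fun k => δ k * ∑ j ∈ Finset.range (N k + 1), f τ ((j : ℝ) * δ k))
      atTop (nhds (∫ x in Set.Ioi (0:ℝ), f τ x)) := by
  set D : ℝ := ∫ x in Set.Ioi (0:ℝ), f τ x with hD
  set T : ℕ → ℝ := fun k => ∫ x in (0:ℝ)..((N k : ℝ) * δ k), f τ x with hT
  have hTlim : Tendsto T atTop (nhds D) :=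
    intervalIntegral_tendsto_integral_Ioi 0 (f_int τ hτ) hNδ
  have hTδlim : Tendsto (fun k => T k + δ k) atTop (nhds D) := by
    simpa using hTlim.add hδ0
  refine tendsto_of_tendsto_of_tendsto_of_le_of_le' hTlim hTδlim ?_ ?_
  · filter_upwards [hδpos] with k hδk
    set g : ℝ → ℝ := fun x => f τ (x * δ k) with hg
    have hganti : AntitoneOn g (Set.Icc (0:ℝ) (0 + (N k : ℝ))) := by
      intro a ha b hb hab
      exact f_anti τ (by linarith) (Set.mem_Ici.mpr (mul_nonneg ha.1 hδk.le))
        (Set.mem_Ici.mpr (mul_nonneg hb.1 hδk.le))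
        (mul_le_mul_of_nonneg_right hab hδk.le)
    have hcv : ∫ x in (0:ℝ)..(0 + (N k : ℝ)), g x = (δ k)⁻¹ * T k := by
      rw [hg]
      rw [intervalIntegral.integral_comp_mul_right (f τ) hδk.ne']
      simp [hT, smul_eq_mul]
    have h1 := hganti.integral_le_sum
    calc T k = δ k * ((δ k)⁻¹ * T k) := by field_simp
      _ = δ k * ∫ x in (0:ℝ)..(0 + (N k : ℝ)), g x := by rw [hcv]
      _ ≤ δ k * ∑ i ∈ Finset.range (N k), g (0 + (i:ℝ)) :=
          mul_le_mul_of_nonneg_left h1 hδk.le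
      _ = δ k * ∑ i ∈ Finset.range (N k), f τ ((i:ℝ) * δ k) := by simp [hg]
      _ ≤ δ k * ∑ j ∈ Finset.range (N k + 1), f τ ((j:ℝ) * δ k) := by
          refine mul_le_mul_of_nonneg_left ?_ hδk.le
          refine Finset.sum_le_sum_of_subset_of_nonneg
            (Finset.range_subset_range.mpr (Nat.le_succ _)) ?_
          intro i _ _; exact f_nonneg τ _
  · filter_upwards [hδpos] with k hδk
    set g : ℝ → ℝ := fun x => f τ (x * δ k) with hg
    have hganti : AntitoneOn g (Set.Icc (0:ℝ) (0 + (N k : ℝ))) := by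
      intro a ha b hb hab
      exact f_anti τ (by linarith) (Set.mem_Ici.mpr (mul_nonneg ha.1 hδk.le))
        (Set.mem_Ici.mpr (mul_nonneg hb.1 hδk.le))
        (mul_le_mul_of_nonneg_right hab hδk.le)
    have hcv : ∫ x in (0:ℝ)..(0 + (N k : ℝ)), g x = (δ k)⁻¹ * T k := by
      rw [hg]
      rw [intervalIntegral.integral_comp_mul_right (f τ) hδk.ne']
      simp [hT, smul_eq_mul]
    have h2 := hganti.sum_le_integral
    have key : ∑ j ∈ Finset.range (N k + 1), f τ ((j:ℝ) * δ k)
        ≤ (δ k)⁻¹ * T k + 1 := by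
      rw [Finset.sum_range_succ']
      have e0 : f τ (((0:ℕ):ℝ) * δ k) = 1 := by simp [f_zero]
      rw [e0]
      have hle : ∑ i ∈ Finset.range (N k), f τ (((i + 1 : ℕ):ℝ) * δ k)
          ≤ (δ k)⁻¹ * T k := by
        rw [← hcv]
        refine le_trans (le_of_eq ?_) h2
        exact Finset.sum_congr rfl fun i _ => by simp [hg]
      linarith
    calc δ k * ∑ j ∈ Finset.range (N k + 1), f τ ((j:ℝ) * δ k)
        ≤ δ k * ((δ k)⁻¹ * T k + 1) := mul_le_mul_of_nonneg_left key hδk.le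
      _ = T k + δ k := by field_simp; try ring

end Stmt6Aux

/-- Let `τ > 1` and `D₁ = ∫₀^∞ (x²+1)^{−τ/2} dx`. If `h_k ∈ (0,1)`,
`h_k → 0` and `k h_k → ∞`, then
`(π√(1−h_k²)/(h_k k)) ∑_{i=1}^{⌊k/2⌋+1} (1 + ((1−h_k²)/h_k²)((i−1)²π²/k²))^{−τ/2} → D₁`. -/
theorem stmt_6 (τ : ℝ) (hτ : 1 < τ)
    (D₁ : ℝ) (hD₁ : D₁ = ∫ x in Set.Ioi (0 : ℝ), (x ^ 2 + 1) ^ (-τ / 2))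
    (h : ℕ → ℝ) (hmem : ∀ k, 2 ≤ k → h k ∈ Set.Ioo (0 : ℝ) 1)
    (h0 : Tendsto h atTop (nhds 0))
    (hk : Tendsto (fun k : ℕ => (k : ℝ) * h k) atTop atTop) :
    Tendsto (fun k : ℕ =>
        Real.pi * Real.sqrt (1 - h k ^ 2) / (h k * k) *
          ∑ i ∈ Finset.Icc 1 (k / 2 + 1),
            (1 + (1 - h k ^ 2) / h k ^ 2 * (((i : ℝ) - 1) ^ 2 * Real.pi ^ 2 / (k : ℝ) ^ 2))
              ^ (-τ / 2))
      atTop (nhds D₁) := by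
  classical
  set δ : ℕ → ℝ := fun k => Real.pi * Real.sqrt (1 - h k ^ 2) / (h k * k) with hδdef
  set N : ℕ → ℕ := fun k => k / 2 with hNdef
  -- basic eventual facts
  have hmem' : ∀ᶠ k in atTop, h k ∈ Set.Ioo (0:ℝ) 1 := by
    filter_upwards [eventually_ge_atTop 2] with k hk2 using hmem k hk2
  have hs1 : Tendsto (fun k => Real.sqrt (1 - h k ^ 2)) atTop (nhds 1) := by
    have : Tendsto (fun k => 1 - h k ^ 2) atTop (nhds 1) := by
      have := (h0.mul h0)
      simpa using (tendsto_const_nhds.sub ((h0.pow 2)))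
    have := (Real.continuous_sqrt.tendsto 1).comp this
    simpa [Function.comp_def] using this
  have hδpos : ∀ᶠ k in atTop, 0 < δ k := by
    filter_upwards [hmem', eventually_ge_atTop 2] with k hm hk2
    have hk0 : (0:ℝ) < k := by positivity
    have hsq : (0:ℝ) < Real.sqrt (1 - h k ^ 2) := Real.sqrt_pos.mpr (by nlinarith [hm.1, hm.2])
    simp only [hδdef]
    exact div_pos (mul_pos Real.pi_pos hsq) (mul_pos hm.1 hk0)
  have hδ0 : Tendsto δ atTop (nhds 0) := by
    have hinv : Tendsto (fun k : ℕ => ((k : ℝ) * h k)⁻¹) atTop (nhds 0) :=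
      hk.inv_tendsto_atTop
    have hmul : Tendsto (fun k => (Real.pi * Real.sqrt (1 - h k ^ 2)) * ((k : ℝ) * h k)⁻¹)
        atTop (nhds 0) := by
      have := ((tendsto_const_nhds (x := Real.pi)).mul hs1).mul hinv
      simpa using this
    refine hmul.congr' ?_
    filter_upwards [hmem', eventually_ge_atTop 2] with k hm hk2
    have hk0 : (0:ℝ) < k := by positivity
    have hh0 : h k ≠ 0 := ne_of_gt hm.1
    simp only [hδdef]
    rw [mul_comm ((k:ℝ)) (h k), ← div_eq_mul_inv]
  have hNδ : Tendsto (fun k => (N k : ℝ) * δ k) atTop atTop := by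
    have hhin : Tendsto (fun k => Real.pi / (8 * h k)) atTop atTop := by
      have h1 : Tendsto h atTop (nhdsWithin 0 (Set.Ioi 0)) := by
        rw [tendsto_nhdsWithin_iff]
        exact ⟨h0, by filter_upwards [hmem'] with k hm using hm.1⟩
      have h2 : Tendsto (fun k => (h k)⁻¹) atTop atTop := h1.inv_tendsto_nhdsGT_zero
      have h3 : Tendsto (fun k => (Real.pi / 8) * (h k)⁻¹) atTop atTop :=
        h2.const_mul_atTop (by positivity)
      refine h3.congr fun k => by rw [div_mul_eq_mul_div, div_eq_mul_inv]; ring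
    refine tendsto_atTop_mono' _ ?_ hhin
    filter_upwards [hmem', eventually_ge_atTop 2, hs1.eventually (eventually_ge_nhds (by norm_num : (1:ℝ)/2 < 1))]
      with k hm hk2 hsk
    have hk0 : (0:ℝ) < k := by positivity
    have hh0 : 0 < h k := hm.1
    have hspos : (0:ℝ) < Real.sqrt (1 - h k ^ 2) := by linarith
    have hA : (k:ℝ)/4 ≤ (N k : ℝ) := by
      have hnat : k ≤ 2 * (k / 2) + 1 := by omega
      have hc : (k:ℝ) ≤ 2 * ((k/2 : ℕ):ℝ) + 1 := by exact_mod_cast hnat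
      have hk2' : (2:ℝ) ≤ (k:ℝ) := by exact_mod_cast hk2
      simp only [hNdef]
      linarith
    have hπ := Real.pi_pos
    rw [hδdef]
    rw [div_le_iff₀ (by positivity)]
    have expand : (N k : ℝ) * (Real.pi * Real.sqrt (1 - h k ^ 2) / (h k * ↑k)) * (8 * h k)
        = 8 * (N k : ℝ) * Real.pi * Real.sqrt (1 - h k ^ 2) / (k:ℝ) := by
      field_simp
    rw [expand, le_div_iff₀ hk0]
    nlinarith [mul_pos hπ hk0, mul_le_mul_of_nonneg_left hsk (le_of_lt (mul_pos hπ hk0)),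
      mul_le_mul_of_nonneg_right hA (mul_pos hπ hspos).le]
  have hmain := Stmt6Aux.riemann τ hτ δ N hδpos hδ0 hNδ
  rw [hD₁]
  have hint : (∫ x in Set.Ioi (0:ℝ), (x ^ 2 + 1) ^ (-τ / 2))
      = ∫ x in Set.Ioi (0:ℝ), Stmt6Aux.f τ x := rfl
  rw [hint]
  refine hmain.congr' ?_
  filter_upwards [hmem', eventually_ge_atTop 2] with k hm hk2
  have hk0 : (0:ℝ) < k := by positivity
  have hh0 : 0 < h k := hm.1
  have hs2 : Real.sqrt (1 - h k ^ 2) ^ 2 = 1 - h k ^ 2 :=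
    Real.sq_sqrt (by nlinarith [hm.2])
  congr 1
  rw [← Finset.Ico_add_one_right_eq_Icc, Finset.sum_Ico_eq_sum_range]
  simp only [Nat.succ_sub_one, Nat.add_sub_cancel]
  refine Finset.sum_congr rfl fun j _ => ?_
  congr 1
  have hcast : ((1 + j : ℕ) : ℝ) - 1 = (j : ℝ) := by push_cast; ring
  rw [hcast]
  simp only [Stmt6Aux.f, hδdef]
  rw [mul_pow, div_pow, mul_pow, mul_pow, hs2]
  field_simp
  ring
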